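/- Suppose μ < ω₂ has cofinality ω, μ is a limit point of C_β for some β with μ < β < ω₂, and the set of limit points of C_μ is cofinal in μ. Then there exists q ∈ Q such that every p ∈ Q_μ has an extension p̄ ≤ p in Q_μ that is incompatible with q in Q. Consequently, Q_μ is not a complete suborder of Q. -/

import Mathlib

open Ordinal Set

universe u

noncomputable section

/-- `ω₁`, the first uncountable cardinal, viewed as an ordinal. -/
def omega1 : Ordinal.{u} := (Cardinal.aleph 1).ord

/-- `ω₂`, the second uncountable cardinal, viewed as an ordinal. -/
def omega2 : Ordinal.{u} := (Cardinal.aleph 2).ord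

/-- `δ` is a limit point of the set of ordinals `s`: `δ > 0` and `sup (s ∩ δ) = δ`. -/
def IsLimPt (s : Set Ordinal.{u}) (δ : Ordinal.{u}) : Prop :=
  0 < δ ∧ sSup (s ∩ Set.Iio δ) = δ

/-- `s` is a closed unbounded subset of the (limit) ordinal `α`: it consists of
ordinals below `α`, is unbounded in `α`, and contains all of its limit points below `α`. -/
def IsClubIn (s : Set Ordinal.{u}) (α : Ordinal.{u}) : Prop :=
  s ⊆ Set.Iio α ∧ (∀ ξ < α, ∃ η ∈ s, ξ < η) ∧ ∀ δ < α, IsLimPt s δ → δ ∈ s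

open Classical in
/-- The order type of a set of ordinals: the unique ordinal `o` whose lift is the
order type of the well-order induced on `s` (taken to be `0` if `s` is too large). -/
def otp (s : Set Ordinal.{u}) : Ordinal.{u} :=
  if h : ∃ o : Ordinal.{u},
      Ordinal.lift.{u + 1, u} o = @Ordinal.type s (Subrel (· < ·) s)
        (by exact (inferInstance : IsWellOrder s (Subrel (· < ·) (· ∈ s))))
  then h.choose else 0

/-- `Λ(α,β)`: the largest limit point of `C β ∩ (α+1)`, taken to be `0` if none exists. -/
def Lam (C : Ordinal.{u} → Set Ordinal.{u}) (α β : Ordinal.{u}) : Ordinal.{u} :=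
  sSup {δ | IsLimPt (C β ∩ Set.Iic α) δ}

/-- `C` is a square-like sequence `⟨C_α : α < ω₂⟩` as in the context:
`C_0 = ∅`, `C_{α+1} = {α}`; for limit `α < ω₂`, `C_α` is club in `α` with
`otp(C_α) ≤ ω₁`, and `otp(C_α) < ω₁` if `cf(α) = ω`; every member of any `C_α`
has cofinality at most `ω`; and `C_α = C_β ∩ α` whenever `α` is a limit point of `C_β`. -/
structure SqSeq (C : Ordinal.{u} → Set Ordinal.{u}) : Prop where
  zero : C 0 = ∅
  succ : ∀ α : Ordinal.{u}, C (α + 1) = {α}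
  club : ∀ α < omega2.{u}, Order.IsSuccLimit α → IsClubIn (C α) α
  otp_le : ∀ α < omega2.{u}, Order.IsSuccLimit α → otp (C α) ≤ omega1
  otp_lt : ∀ α < omega2.{u}, Order.IsSuccLimit α →
    Ordinal.cof α = Cardinal.aleph0 → otp (C α) < omega1
  cof_le : ∀ α β : Ordinal.{u}, β ∈ C α → Ordinal.cof β ≤ Cardinal.aleph0
  coh : ∀ α β : Ordinal.{u}, β < omega2.{u} → IsLimPt (C β) α → C α = C β ∩ Set.Iio α

/-- `rho` is Todorcevic's ρ function associated with the sequence `C`: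
`ρ(α,α) = 0`, `ρ` takes values below `ω₁`, and for `α < β < ω₂`,
`ρ(α,β) = max({otp(C_β ∩ α), ρ(α, min(C_β \ α))} ∪ {ρ(ξ,α) : ξ ∈ C_β ∩ [Λ(α,β), α)})`. -/
structure RhoFun (C : Ordinal.{u} → Set Ordinal.{u})
    (rho : Ordinal.{u} → Ordinal.{u} → Ordinal.{u}) : Prop where
  refl : ∀ α : Ordinal.{u}, rho α α = 0
  lt_omega1 : ∀ α β : Ordinal.{u}, α ≤ β → β < omega2.{u} → rho α β < omega1
  eq : ∀ α β : Ordinal.{u}, α < β → β < omega2.{u} →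
    rho α β = sSup ({otp (C β ∩ Set.Iio α), rho α (sInf (C β ∩ Set.Ici α))} ∪
      (fun ξ => rho ξ α) '' (C β ∩ Set.Ico (Lam C α β) α))


/-- A finite partial function assigning finite sets of countable ordinals to
finitely many ordinals, given by a finite domain and a value function. -/
structure FinPF : Type (u + 1) where
  dom : Finset Ordinal.{u}
  val : Ordinal.{u} → Finset Ordinal.{u}

/-- `p` is a condition of the poset `Q` associated with `rho`: `dom(p) ⊆ ω₂`,
each `p(α)` is a finite subset of `ω₁` meeting each interval `[ν, ν + ω)` in at
most one point, `p(α) ∩ p(β)` is an initial segment of both `p(α)` and `p(β)`,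
and `max(p(α) ∩ p(β)) ≤ ρ(α,β)` for `α < β` in `dom(p)`. -/
def InQ (rho : Ordinal.{u} → Ordinal.{u} → Ordinal.{u}) (p : FinPF.{u}) : Prop :=
  (∀ α ∈ p.dom, α < omega2.{u}) ∧
  (∀ α ∈ p.dom, ∀ ν ∈ p.val α, ν < omega1.{u}) ∧
  (∀ α ∈ p.dom, ∀ ν : Ordinal.{u}, ∀ x ∈ p.val α, ∀ y ∈ p.val α,
    ν ≤ x → x < ν + Ordinal.omega0 → ν ≤ y → y < ν + Ordinal.omega0 → x = y) ∧
  (∀ α ∈ p.dom, ∀ β ∈ p.dom, ∀ x ∈ p.val α ∩ p.val β, ∀ y ∈ p.val α,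
    y < x → y ∈ p.val β) ∧
  (∀ α ∈ p.dom, ∀ β ∈ p.dom, α < β → ∀ ν ∈ p.val α ∩ p.val β, ν ≤ rho α β)

/-- The order of the poset `Q` (and `P`): `q ≤ p` iff `dom(p) ⊆ dom(q)` and
`p(α) ⊆ q(α)` for all `α ∈ dom(p)`. -/
def FinPF.le (q p : FinPF.{u}) : Prop :=
  p.dom ⊆ q.dom ∧ ∀ α ∈ p.dom, p.val α ⊆ q.val α

/-- Two conditions of `Q` are compatible if they have a common extension in `Q`. -/
def QCompat (rho : Ordinal.{u} → Ordinal.{u} → Ordinal.{u}) (p q : FinPF.{u}) : Prop :=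
  ∃ r : FinPF.{u}, InQ rho r ∧ r.le p ∧ r.le q

-- ## auxiliary otp lemmas
def styp (s : Set Ordinal.{u}) : Ordinal.{u+1} :=
  @Ordinal.type s (Subrel (· < ·) s)
    (by exact (inferInstance : IsWellOrder s (Subrel (· < ·) (· ∈ s))))

lemma styp_mono {s t : Set Ordinal.{u}} (h : s ⊆ t) : styp s ≤ styp t := by
  have i1 : IsWellOrder s (Subrel (· < ·) s) :=
    by exact (inferInstance : IsWellOrder s (Subrel (· < ·) (· ∈ s)))
  have i2 : IsWellOrder t (Subrel (· < ·) t) :=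
    by exact (inferInstance : IsWellOrder t (Subrel (· < ·) (· ∈ t)))
  refine RelEmbedding.ordinal_type_le ⟨⟨Set.inclusion h, Set.inclusion_injective h⟩, ?_⟩
  intro a b; rfl

lemma otp_exists {s : Set Ordinal.{u}} {μ : Ordinal.{u}} (h : s ⊆ Set.Iio μ) :
    ∃ o : Ordinal.{u}, Ordinal.lift.{u + 1, u} o = styp s := by
  apply Ordinal.mem_range_lift_of_le (a := μ)
  calc styp s ≤ styp (Set.Iio μ) := styp_mono h
    _ = Ordinal.lift.{u+1, u} μ := (Ordinal.type_Iio_lt μ).trans (Ordinal.typein_ordinal μ)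

lemma otp_lift {s : Set Ordinal.{u}} (h : ∃ o : Ordinal.{u}, Ordinal.lift.{u + 1, u} o = styp s) :
    Ordinal.lift.{u + 1, u} (otp s) = styp s := by
  unfold styp at h ⊢
  rw [otp, dif_pos h]
  exact h.choose_spec

lemma otp_mono {s t : Set Ordinal.{u}} (hst : s ⊆ t) {μ : Ordinal.{u}} (ht : t ⊆ Set.Iio μ) :
    otp s ≤ otp t := by
  have hs := otp_exists (hst.trans ht)
  have ht' := otp_exists ht
  rw [← Ordinal.lift_le.{u+1}, otp_lift hs, otp_lift ht']
  exact styp_mono hst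

-- ## limit point basics
lemma isLimPt_le {s : Set Ordinal.{u}} {α δ : Ordinal.{u}} (hs : s ⊆ Set.Iic α)
    (h : IsLimPt s δ) : δ ≤ α := by
  obtain ⟨hpos, hsup⟩ := h
  rcases Set.eq_empty_or_nonempty (s ∩ Set.Iio δ) with he | hne
  · rw [he, csSup_empty] at hsup
    exact absurd hsup.symm (by simpa using hpos.ne')
  · rw [← hsup]
    exact csSup_le hne fun b hb => hs hb.1

lemma Lam_self {C : Ordinal.{u} → Set Ordinal.{u}} {α μ : Ordinal.{u}}
    (h : IsLimPt (C μ) α) : Lam C α μ = α := by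
  apply IsGreatest.csSup_eq
  constructor
  · refine ⟨h.1, ?_⟩
    rw [Set.inter_assoc, Set.inter_eq_right.mpr Set.Iio_subset_Iic_self]
    exact h.2
  · intro δ hδ
    exact isLimPt_le Set.inter_subset_right hδ

-- ρ at a limit point of C μ
lemma rho_limPt {C : Ordinal.{u} → Set Ordinal.{u}} (hC : SqSeq C)
    {rho : Ordinal.{u} → Ordinal.{u} → Ordinal.{u}} (hrho : RhoFun C rho)
    {μ α : Ordinal.{u}} (hμ : μ < omega2.{u}) (hμlim : Order.IsSuccLimit μ)
    (hα : IsLimPt (C μ) α) (hαμ : α < μ) :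
    rho α μ = otp (C μ ∩ Set.Iio α) := by
  have hmem : α ∈ C μ := (hC.club μ hμ hμlim).2.2 α hαμ hα
  have hinf : sInf (C μ ∩ Set.Ici α) = α := by
    apply le_antisymm
    · exact csInf_le (OrderBot.bddBelow _) ⟨hmem, le_refl α⟩
    · exact le_csInf ⟨α, hmem, le_refl α⟩ fun b hb => hb.2
  rw [hrho.eq α μ hαμ hμ, hinf, hrho.refl, Lam_self hα, Set.Ico_self, Set.inter_empty,
    Set.image_empty, Set.union_empty, csSup_pair]
  exact sup_eq_left.mpr zero_le

-- coherence of ρ below a limit point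
lemma rho_coh {C : Ordinal.{u} → Set Ordinal.{u}} (hC : SqSeq C)
    {rho : Ordinal.{u} → Ordinal.{u} → Ordinal.{u}} (hrho : RhoFun C rho)
    {μ α δ : Ordinal.{u}} (hμ : μ < omega2.{u})
    (hα : IsLimPt (C μ) α) (hαμ : α < μ) (hδα : δ < α) :
    rho δ α = rho δ μ := by
  have hcoh : C α = C μ ∩ Set.Iio α := hC.coh α μ hμ hα
  have hne : (C μ ∩ Set.Iio α).Nonempty := by
    rcases Set.eq_empty_or_nonempty (C μ ∩ Set.Iio α) with he | hne
    · exfalso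
      have := hα.2
      rw [he, csSup_empty] at this
      exact absurd this.symm (by simpa using hα.1.ne')
    · exact hne
  obtain ⟨ξ, hξs, hδξ⟩ := exists_lt_of_lt_csSup hne (hα.2 ▸ hδα)
  have e1 : C α ∩ Set.Iio δ = C μ ∩ Set.Iio δ := by
    rw [hcoh, Set.inter_assoc, Set.Iio_inter_Iio, min_eq_right hδα.le]
  have e2 : C α ∩ Set.Iic δ = C μ ∩ Set.Iic δ := by
    rw [hcoh, Set.inter_assoc]
    congr 1
    exact Set.inter_eq_right.mpr (fun x hx => lt_of_le_of_lt hx hδα)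
  have hsinf : sInf (C α ∩ Set.Ici δ) = sInf (C μ ∩ Set.Ici δ) := by
    have hmne : (C μ ∩ Set.Ici δ).Nonempty := ⟨ξ, hξs.1, hδξ.le⟩
    have hm : sInf (C μ ∩ Set.Ici δ) ∈ C μ ∩ Set.Ici δ := csInf_mem hmne
    have hmα : sInf (C μ ∩ Set.Ici δ) < α :=
      lt_of_le_of_lt (csInf_le (OrderBot.bddBelow _) ⟨hξs.1, hδξ.le⟩) hξs.2
    have hmem2 : sInf (C μ ∩ Set.Ici δ) ∈ C α ∩ Set.Ici δ := by
      rw [hcoh]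
      exact ⟨⟨hm.1, hmα⟩, hm.2⟩
    apply le_antisymm
    · exact csInf_le (OrderBot.bddBelow _) hmem2
    · refine le_csInf ⟨_, hmem2⟩ fun b hb => ?_
      rw [hcoh] at hb
      exact csInf_le (OrderBot.bddBelow _) ⟨hb.1.1, hb.2⟩
  have e3 : Lam C δ α = Lam C δ μ := by
    unfold Lam
    rw [e2]
  have e4 : C α ∩ Set.Ico (Lam C δ μ) δ = C μ ∩ Set.Ico (Lam C δ μ) δ := by
    rw [hcoh, Set.inter_assoc]
    congr 1
    exact Set.inter_eq_right.mpr (fun x hx => lt_trans hx.2 hδα)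
  rw [hrho.eq δ α hδα (lt_trans hαμ hμ), hrho.eq δ μ (lt_trans hδα hαμ) hμ,
    e1, hsinf, e3, e4]

/-- If `μ < ω₂` has cofinality `ω`, `μ` is a limit point of some `C_β` with
`μ < β < ω₂`, and the limit points of `C_μ` are cofinal in `μ`, then there is a
condition `q ∈ Q` such that every `p ∈ Q_μ` has an extension `p̄ ∈ Q_μ`
incompatible with `q` in `Q`; hence `Q_μ` is not a complete suborder of `Q`. -/
theorem Qmu_not_complete_suborder (C : Ordinal.{u} → Set Ordinal.{u}) (hC : SqSeq C)
    (rho : Ordinal.{u} → Ordinal.{u} → Ordinal.{u}) (hrho : RhoFun C rho)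
    (μ : Ordinal.{u}) (hμ : μ < omega2.{u}) (hcf : Ordinal.cof μ = Cardinal.aleph0)
    (hβ : ∃ β : Ordinal.{u}, μ < β ∧ β < omega2.{u} ∧ IsLimPt (C β) μ)
    (hlp : ∀ η < μ, ∃ δ, η ≤ δ ∧ δ < μ ∧ IsLimPt (C μ) δ) :
    ∃ q : FinPF.{u}, InQ rho q ∧
      ∀ p : FinPF.{u}, InQ rho p → (∀ α ∈ p.dom, α < μ) →
        ∃ pbar : FinPF.{u}, InQ rho pbar ∧ (∀ α ∈ pbar.dom, α < μ) ∧
          pbar.le p ∧ ¬ QCompat rho pbar q := by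
  classical
  have hμlim : Order.IsSuccLimit μ := Ordinal.aleph0_le_cof.mp (le_of_eq hcf.symm)
  have hclub := hC.club μ hμ hμlim
  have hω1lim : Order.IsSuccLimit omega1.{u} := Cardinal.isSuccLimit_ord (Cardinal.aleph0_le_aleph 1)
  set ν₀ : Ordinal.{u} := otp (C μ) + 1 with hν₀def
  have hotpμ : otp (C μ) < omega1.{u} := hC.otp_lt μ hμ hμlim hcf
  have hν₀ω1 : ν₀ < omega1.{u} := by
    rw [hν₀def, Ordinal.add_one_eq_succ]
    exact hω1lim.succ_lt hotpμ
  have hotpν₀ : otp (C μ) < ν₀ := by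
    rw [hν₀def, Ordinal.add_one_eq_succ]
    exact Order.lt_succ _
  -- ρ(α, μ) < ν₀ for limit points α of C μ
  have key1 : ∀ α, IsLimPt (C μ) α → α < μ → rho α μ < ν₀ := by
    intro α hα hαμ
    rw [rho_limPt hC hrho hμ hμlim hα hαμ]
    exact lt_of_le_of_lt (otp_mono Set.inter_subset_left hclub.1) hotpν₀
  refine ⟨⟨{μ}, fun _ => {ν₀}⟩, ?_, ?_⟩
  · refine ⟨?_, ?_, ?_, ?_, ?_⟩
    · intro α hα
      rw [Finset.mem_singleton] at hα
      exact hα ▸ hμ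
    · intro α _ ν hν
      rw [Finset.mem_singleton] at hν
      exact hν ▸ hν₀ω1
    · intro α _ ν x hx y hy _ _ _ _
      rw [Finset.mem_singleton] at hx hy
      rw [hx, hy]
    · intro α _ β _ x _ y hy _
      exact hy
    · intro α hα β hβ' hαβ
      rw [Finset.mem_singleton] at hα hβ'
      rw [hα, hβ'] at hαβ
      exact absurd hαβ (lt_irrefl μ)
  intro p hp hpμ
  by_cases hbad : ∃ δ₁ ∈ p.dom, ∃ δ₂ ∈ p.dom, ∃ ν ∈ p.val δ₁,
      ν₀ ∈ p.val δ₁ ∧ ν ∈ p.val δ₂ ∧ ν ≤ ν₀ ∧ rho δ₂ μ < ν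
  · -- p itself is incompatible with q
    refine ⟨p, hp, hpμ, ⟨subset_rfl, fun _ _ => subset_rfl⟩, ?_⟩
    rintro ⟨r, hr, hrp, hrq⟩
    obtain ⟨δ₁, hδ₁, δ₂, hδ₂, ν, hν1, hν₀1, hν2, hνle, hνρ⟩ := hbad
    have hμr : μ ∈ r.dom := hrq.1 (Finset.mem_singleton_self μ)
    have hν₀rμ : ν₀ ∈ r.val μ := hrq.2 μ (Finset.mem_singleton_self μ)
      (Finset.mem_singleton_self ν₀)
    have hδ₁r : δ₁ ∈ r.dom := hrp.1 hδ₁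
    have hνμ : ν ∈ r.val μ := by
      rcases eq_or_lt_of_le hνle with h | h
      · exact h ▸ hν₀rμ
      · exact hr.2.2.2.1 δ₁ hδ₁r μ hμr ν₀
          (Finset.mem_inter.mpr ⟨hrp.2 δ₁ hδ₁ hν₀1, hν₀rμ⟩) ν (hrp.2 δ₁ hδ₁ hν1) h
    have := hr.2.2.2.2 δ₂ (hrp.1 hδ₂) μ hμr (hpμ δ₂ hδ₂) ν
      (Finset.mem_inter.mpr ⟨hrp.2 δ₂ hδ₂ hν2, hνμ⟩)
    exact absurd this (not_le.mpr hνρ)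
  · push_neg at hbad
    -- pick a fresh limit point of C μ above the domain of p
    have hsup : p.dom.sup id + 1 < μ := by
      rw [Ordinal.add_one_eq_succ]
      apply hμlim.succ_lt
      rcases Finset.eq_empty_or_nonempty p.dom with he | hne
      · simpa [he] using hμlim.pos
      · exact (Finset.sup_lt_iff (by simpa using hμlim.pos)).mpr
          (fun b hb => hpμ b hb)
    obtain ⟨αn, hηαn, hαnμ, hαnlp⟩ := hlp (p.dom.sup id + 1) hsup
    have hαn_gt : ∀ δ ∈ p.dom, δ < αn := by
      intro δ hδ
      have h1 : δ ≤ p.dom.sup id := Finset.le_sup (f := id) hδ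
      have h2 : δ < p.dom.sup id + 1 := by
        rw [Ordinal.add_one_eq_succ]
        exact Order.lt_succ_iff.mpr h1
      exact lt_of_lt_of_le h2 hηαn
    have hαn_not : αn ∉ p.dom := fun h => absurd rfl (hαn_gt αn h).ne'
    have hρeq : ∀ δ ∈ p.dom, rho δ αn = rho δ μ := fun δ hδ =>
      rho_coh hC hrho hμ hαnlp hαnμ (hαn_gt δ hδ)
    -- the new finite set S
    obtain ⟨S, hSν₀, hSle, hSsub⟩ :
        ∃ S : Finset Ordinal.{u}, ν₀ ∈ S ∧ (∀ x ∈ S, x ≤ ν₀) ∧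
          ((∃ δh ∈ p.dom, ν₀ ∈ p.val δh ∧ S = (p.val δh).filter (· ≤ ν₀)) ∨
            ((∀ δ ∈ p.dom, ν₀ ∉ p.val δ) ∧ S = {ν₀})) := by
      by_cases hprob : ∃ δh ∈ p.dom, ν₀ ∈ p.val δh
      · obtain ⟨δh, hδh, hδhν₀⟩ := hprob
        exact ⟨(p.val δh).filter (· ≤ ν₀), Finset.mem_filter.mpr ⟨hδhν₀, le_refl ν₀⟩,
          fun x hx => (Finset.mem_filter.mp hx).2, Or.inl ⟨δh, hδh, hδhν₀, rfl⟩⟩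
      · push_neg at hprob
        exact ⟨{ν₀}, Finset.mem_singleton_self ν₀,
          fun x hx => le_of_eq (Finset.mem_singleton.mp hx),
          Or.inr ⟨hprob, rfl⟩⟩
    -- properties of S against p
    have s4 : ∀ δ ∈ p.dom, ∀ x ∈ S, x ∈ p.val δ → ∀ y ∈ S, y < x → y ∈ p.val δ := by
      intro δ hδ x hxS hxδ y hyS hyx
      rcases hSsub with ⟨δh, hδh, _, hSeq⟩ | ⟨hnone, hSeq⟩
      · rw [hSeq] at hxS hyS
        exact hp.2.2.2.1 δh hδh δ hδ x
          (Finset.mem_inter.mpr ⟨(Finset.mem_filter.mp hxS).1, hxδ⟩)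
          y (Finset.mem_filter.mp hyS).1 hyx
      · rw [hSeq, Finset.mem_singleton] at hxS hyS
        rw [hxS, hyS] at hyx
        exact absurd hyx (lt_irrefl ν₀)
    have s5 : ∀ δ ∈ p.dom, ∀ x ∈ S, x ∈ p.val δ → ∀ y ∈ p.val δ, y < x → y ∈ S := by
      intro δ hδ x hxS hxδ y hyδ hyx
      rcases hSsub with ⟨δh, hδh, _, hSeq⟩ | ⟨hnone, hSeq⟩
      · rw [hSeq] at hxS ⊢
        refine Finset.mem_filter.mpr ⟨?_, le_of_lt (lt_of_lt_of_le hyx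
          ((Finset.mem_filter.mp hxS).2))⟩
        exact hp.2.2.2.1 δ hδ δh hδh x
          (Finset.mem_inter.mpr ⟨hxδ, (Finset.mem_filter.mp hxS).1⟩) y hyδ hyx
      · rw [hSeq, Finset.mem_singleton] at hxS
        exact absurd (hxS ▸ hxδ) (hnone δ hδ)
    have s6 : ∀ δ ∈ p.dom, ∀ ν ∈ S, ν ∈ p.val δ → ν ≤ rho δ μ := by
      intro δ hδ ν hνS hνδ
      rcases hSsub with ⟨δh, hδh, hδhν₀, hSeq⟩ | ⟨hnone, hSeq⟩
      · rw [hSeq] at hνS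
        exact hbad δh hδh δ hδ ν (Finset.mem_filter.mp hνS).1 hδhν₀ hνδ
          (Finset.mem_filter.mp hνS).2
      · rw [hSeq, Finset.mem_singleton] at hνS
        exact absurd (hνS ▸ hνδ) (hnone δ hδ)
    have sspace : ∀ ν : Ordinal.{u}, ∀ x ∈ S, ∀ y ∈ S,
        ν ≤ x → x < ν + Ordinal.omega0 → ν ≤ y → y < ν + Ordinal.omega0 → x = y := by
      intro ν x hx y hy h1 h2 h3 h4
      rcases hSsub with ⟨δh, hδh, _, hSeq⟩ | ⟨_, hSeq⟩
      · rw [hSeq] at hx hy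
        exact hp.2.2.1 δh hδh ν x (Finset.mem_filter.mp hx).1
          y (Finset.mem_filter.mp hy).1 h1 h2 h3 h4
      · rw [hSeq, Finset.mem_singleton] at hx hy
        rw [hx, hy]
    -- build pbar
    set pbar : FinPF.{u} := ⟨insert αn p.dom, fun γ => if γ = αn then S else p.val γ⟩
      with hpbar
    have hval_at : ∀ γ ∈ p.dom, pbar.val γ = p.val γ := fun γ hγ =>
      if_neg (hαn_gt γ hγ).ne
    have hval_αn : pbar.val αn = S := if_pos rfl
    have hmem_iff : ∀ γ, γ ∈ pbar.dom ↔ γ = αn ∨ γ ∈ p.dom := fun γ =>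
      Finset.mem_insert
    refine ⟨pbar, ⟨?_, ?_, ?_, ?_, ?_⟩, ?_, ⟨?_, ?_⟩, ?_⟩
    · intro α hα
      rcases (hmem_iff α).mp hα with h | h
      · exact h ▸ (hαnμ.trans hμ)
      · exact hp.1 α h
    · intro α hα ν hν
      rcases (hmem_iff α).mp hα with h | h
      · rw [h, hval_αn] at hν
        exact lt_of_le_of_lt (hSle ν hν) hν₀ω1
      · rw [hval_at α h] at hν
        exact hp.2.1 α h ν hν
    · intro α hα ν x hx y hy h1 h2 h3 h4
      rcases (hmem_iff α).mp hα with h | h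
      · rw [h, hval_αn] at hx hy
        exact sspace ν x hx y hy h1 h2 h3 h4
      · rw [hval_at α h] at hx hy
        exact hp.2.2.1 α h ν x hx y hy h1 h2 h3 h4
    · intro α hα β hβ' x hx y hy hyx
      rw [Finset.mem_inter] at hx
      rcases (hmem_iff α).mp hα with h | h <;> rcases (hmem_iff β).mp hβ' with h' | h'
      · rw [h, hval_αn] at hy
        rw [h', hval_αn]
        exact hy
      · rw [h, hval_αn] at hx hy
        rw [hval_at β h'] at hx ⊢
        exact s4 β h' x hx.1 hx.2 y hy hyx
      · rw [hval_at α h] at hx hy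
        rw [h', hval_αn] at hx ⊢
        exact s5 α h x hx.2 hx.1 y hy hyx
      · rw [hval_at α h] at hx hy
        rw [hval_at β h'] at hx ⊢
        exact hp.2.2.2.1 α h β h' x (Finset.mem_inter.mpr hx) y hy hyx
    · intro α hα β hβ' hαβ ν hν
      rw [Finset.mem_inter] at hν
      rcases (hmem_iff α).mp hα with h | h <;> rcases (hmem_iff β).mp hβ' with h' | h'
      · rw [h, h'] at hαβ
        exact absurd hαβ (lt_irrefl αn)
      · exfalso
        rw [h] at hαβ
        exact absurd (hαβ.trans (hαn_gt β h')) (lt_irrefl αn)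
      · rw [hval_at α h] at hν
        rw [h', hval_αn] at hν
        rw [h', hρeq α h]
        exact s6 α h ν hν.2 hν.1
      · rw [hval_at α h, hval_at β h'] at hν
        exact hp.2.2.2.2 α h β h' hαβ ν (Finset.mem_inter.mpr hν)
    · intro α hα
      rcases (hmem_iff α).mp hα with h | h
      · exact h ▸ hαnμ
      · exact hpμ α h
    · exact fun γ hγ => (hmem_iff γ).mpr (Or.inr hγ)
    · intro γ hγ
      rw [hval_at γ hγ]
    · rintro ⟨r, hr, hrpbar, hrq⟩
      have hαnr : αn ∈ r.dom := hrpbar.1 ((hmem_iff αn).mpr (Or.inl rfl))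
      have hμr : μ ∈ r.dom := hrq.1 (Finset.mem_singleton_self μ)
      have hν₀αn : ν₀ ∈ r.val αn := by
        apply hrpbar.2 αn ((hmem_iff αn).mpr (Or.inl rfl))
        rw [hval_αn]
        exact hSν₀
      have hν₀μ : ν₀ ∈ r.val μ := hrq.2 μ (Finset.mem_singleton_self μ)
        (Finset.mem_singleton_self ν₀)
      have := hr.2.2.2.2 αn hαnr μ hμr hαnμ ν₀ (Finset.mem_inter.mpr ⟨hν₀αn, hν₀μ⟩)
      exact absurd this (not_le.mpr (key1 αn hαnlp hαnμ))
end
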